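/- For positive integers n, k with 0 ≤ k ≤ n, the polynomial f_{n,k}(t) := ∑_{j=0}^{k} (-1)^j C(k,j) ∏_{i=0}^{n-1} (it + n - j - i) has nonnegative coefficients. More precisely, f_{n,k}(t) = ∑_{w ∈ W_{n,k}} t^{unlucky(w)}, where W_{n,k} is the set of words w ∈ [n]^n containing each of 1,…,k at least once, and unlucky(w) is the number of unlucky cars under the following parking protocol: cars C_1,…,C_n park in order; car C_i parks in its preferred space w_i if that space is still free, and otherwise parks in the largest free space; a car is unlucky if it does not park in its preferred space. -/

import Mathlib

open Finset Polynomial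

/-- One step of the parking protocol on spaces `1,…,n`: the state is the pair
(set of occupied spaces, number of unlucky cars so far) and `p` is the preferred
space of the next car.  The car parks at `p` if `p ∈ {1,…,n}` is free, and
otherwise parks at the largest free space (and is unlucky). -/
def parkStep (n : ℕ) (s : Finset ℕ × ℕ) (p : ℕ) : Finset ℕ × ℕ :=
  if p ∈ Finset.Icc 1 n ∧ p ∉ s.1 then (insert p s.1, s.2)
  else (insert (WithBot.unbotD 0 ((Finset.Icc 1 n) \ s.1).max) s.1, s.2 + 1)

/-- The number of unlucky cars when the cars park (in order) with the list `l`
of preferences, on the street with spaces `1,…,n`. -/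
def unlucky (n : ℕ) (l : List ℕ) : ℕ := (l.foldl (parkStep n) (∅, 0)).2

namespace Stmt8


/-- top block: greedily insert maxima -/
def topb (S : Finset ℕ) : ℕ → Finset ℕ
  | 0 => ∅
  | m+1 => if h : (S \ topb S m).Nonempty then insert ((S \ topb S m).max' h) (topb S m)
           else topb S m

lemma topb_subset (S : Finset ℕ) (m : ℕ) : topb S m ⊆ S := by
  induction m with
  | zero => simp [topb]
  | succ m ih =>
    rw [topb]
    split_ifs with h
    · exact insert_subset (sdiff_subset (Finset.max'_mem _ h)) ih
    · exact ih

lemma card_topb_le (S : Finset ℕ) (m : ℕ) : (topb S m).card ≤ m := by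
  induction m with
  | zero => simp [topb]
  | succ m ih =>
    rw [topb]
    split_ifs with h
    · exact le_trans (card_insert_le _ _) (Nat.succ_le_succ ih)
    · exact le_trans ih (Nat.le_succ m)

lemma card_topb (S : Finset ℕ) (m : ℕ) (hm : m ≤ S.card) : (topb S m).card = m := by
  induction m with
  | zero => simp [topb]
  | succ m ih =>
    have hm' : m ≤ S.card := le_trans (Nat.le_succ m) hm
    have hcard := ih hm'
    have h : (S \ topb S m).Nonempty := by
      rw [← Finset.card_pos, card_sdiff_of_subset (topb_subset S m), hcard]
      omega
    rw [topb, dif_pos h, card_insert_of_notMem, hcard]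
    have := Finset.max'_mem _ h
    rw [mem_sdiff] at this
    exact this.2

lemma topb_erase_notmem (S : Finset ℕ) (p : ℕ) (m : ℕ) (hpS : p ∈ S)
    (hp : p ∉ topb S m) : topb (S.erase p) m = topb S m := by
  induction m with
  | zero => simp [topb]
  | succ m ih =>
    have hpm : p ∉ topb S m := by
      intro hc; apply hp
      rw [topb]; split_ifs with h
      · exact mem_insert_of_mem hc
      · exact hc
    have ihm := ih hpm
    rw [topb, topb, ihm]
    have hset : S.erase p \ topb S m = (S \ topb S m).erase p := by
      ext x; simp [mem_erase, mem_sdiff]; tauto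
    by_cases h : (S \ topb S m).Nonempty
    · have hpne : p ≠ (S \ topb S m).max' h := by
        intro hc
        exact hp (by rw [topb, dif_pos h, ← hc]; exact mem_insert_self _ _)
      have h2 : (S.erase p \ topb S m).Nonempty := by
        rw [hset]
        exact ⟨_, mem_erase.2 ⟨(hpne ∘ Eq.symm), Finset.max'_mem _ h⟩⟩
      rw [dif_pos h2, dif_pos h]
      congr 1
      have hmm := Finset.max'_mem _ h
      apply le_antisymm
      · apply Finset.max'_le
        intro y hy
        rw [hset] at hy
        exact Finset.le_max' _ _ (Finset.mem_of_mem_erase hy)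
      · apply Finset.le_max'
        rw [hset]
        exact mem_erase.2 ⟨(hpne ∘ Eq.symm), hmm⟩
    · have h2 : ¬ (S.erase p \ topb S m).Nonempty := by
        rw [hset]
        intro ⟨x, hx⟩
        exact h ⟨x, Finset.mem_of_mem_erase hx⟩
      rw [dif_neg h2, dif_neg h]





lemma max'_congr {A B : Finset ℕ} (h : A = B) (hA : A.Nonempty) (hB : B.Nonempty) :
    A.max' hA = B.max' hB := by subst h; rfl

lemma erase_sdiff_erase (S U : Finset ℕ) (p : ℕ) (hpU : p ∈ U) :
    S.erase p \ U.erase p = S \ U := by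
  ext x
  by_cases hxp : x = p
  · subst hxp; simp [hpU]
  · simp [mem_sdiff, mem_erase, hxp]

lemma sdiff_insert' (S T : Finset ℕ) (g : ℕ) :
    S \ insert g T = (S \ T).erase g := by
  ext x; simp only [mem_sdiff, mem_erase, mem_insert]; tauto

lemma topb_erase_mem (S : Finset ℕ) (p : ℕ) : ∀ m, p ∈ topb S m →
    topb (S.erase p) m = (topb S (m+1)).erase p := by
  intro m
  induction m with
  | zero => intro hp; simp [topb] at hp
  | succ m ih =>
    intro hp
    by_cases h : (S \ topb S m).Nonempty
    · set T := topb S m with hT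
      set g := (S \ T).max' h with hg
      have hgmem : g ∈ S \ T := Finset.max'_mem _ h
      have hstep : topb S (m+1) = insert g T := by rw [topb, dif_pos h]
      by_cases hpT : p ∈ T
      · -- case A
        have ihp := ih hpT
        set U := topb S (m+1) with hU
        have hpU : p ∈ U := hstep ▸ mem_insert_of_mem hpT
        have hpS : p ∈ S := topb_subset S m hpT
        have hkey : S.erase p \ topb (S.erase p) m = S \ U := by
          rw [ihp, erase_sdiff_erase S U p hpU]
        by_cases h2 : (S \ U).Nonempty
        · have h2' : (S.erase p \ topb (S.erase p) m).Nonempty := by rw [hkey]; exact h2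
          have hstep2 : topb S (m+1+1) = insert ((S \ U).max' h2) U := by
            rw [topb, dif_pos (show (S \ topb S (m+1)).Nonempty from h2)]
          rw [topb, dif_pos h2', max'_congr hkey h2' h2, ihp, hstep2]
          have hne : (S \ U).max' h2 ≠ p := by
            intro hc
            have := Finset.max'_mem _ h2
            rw [hc] at this
            exact (mem_sdiff.1 this).2 hpU
          rw [Finset.erase_insert_of_ne hne]
        · have h2' : ¬ (S.erase p \ topb (S.erase p) m).Nonempty := by rw [hkey]; exact h2
          have hstep2 : topb S (m+1+1) = topb S (m+1) := by
            rw [topb, dif_neg (show ¬ (S \ topb S (m+1)).Nonempty from h2)]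
          rw [topb, dif_neg h2', ihp, hstep2]
      · -- case B : p = g
        have hpg : p = g := by
          rw [hstep] at hp
          rcases mem_insert.1 hp with h1 | h1
          · exact h1
          · exact absurd h1 hpT
        have hpS : p ∈ S := (mem_sdiff.1 (hpg ▸ hgmem)).1
        have hbase : topb (S.erase p) m = T := topb_erase_notmem S p m hpS hpT
        have hsd : S.erase p \ T = (S \ T).erase g := by
          rw [hpg]; ext x; simp only [mem_sdiff, mem_erase]; tauto
        have hsd2 : S \ topb S (m+1) = (S \ T).erase g := by
          rw [hstep, sdiff_insert']
        by_cases h3 : ((S \ T).erase g).Nonempty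
        · have h3' : (S.erase p \ T).Nonempty := by rw [hsd]; exact h3
          have h3'' : (S \ topb S (m+1)).Nonempty := by rw [hsd2]; exact h3
          have hstep2 : topb S (m+1+1) = insert (((S \ T).erase g).max' h3) (insert g T) := by
            rw [topb, dif_pos h3'', max'_congr hsd2 h3'' h3, hstep]
          rw [topb, hbase, dif_pos h3', max'_congr hsd h3' h3, hstep2]
          have hq : ((S \ T).erase g).max' h3 ≠ g := by
            have := Finset.max'_mem _ h3
            exact (mem_erase.1 this).1
          rw [hpg, Finset.erase_insert_of_ne hq, Finset.erase_insert
            (fun hc => (mem_sdiff.1 hgmem).2 hc)]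
        · have h3' : ¬ (S.erase p \ T).Nonempty := by rw [hsd]; exact h3
          have h3'' : ¬ (S \ topb S (m+1)).Nonempty := by rw [hsd2]; exact h3
          have hstep2 : topb S (m+1+1) = insert g T := by
            rw [topb, dif_neg h3'', hstep]
          rw [topb, hbase, dif_neg h3', hstep2, hpg, Finset.erase_insert
            (fun hc => (mem_sdiff.1 hgmem).2 hc)]
    · -- S \ T empty
      have hstep : topb S (m+1) = topb S m := by rw [topb, dif_neg h]
      rw [hstep] at hp
      have ihp := ih hp
      rw [hstep] at ihp
      have hpS : p ∈ S := topb_subset S m hp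
      have hkey : S.erase p \ topb (S.erase p) m = S \ topb S m := by
        rw [ihp]
        exact erase_sdiff_erase S (topb S m) p hp
      have h2' : ¬ (S.erase p \ topb (S.erase p) m).Nonempty := by rw [hkey]; exact h
      have hstep2 : topb S (m+1+1) = topb S m := by
        rw [topb, dif_neg (show ¬ (S \ topb S (m+1)).Nonempty by rw [hstep]; exact h), hstep]
      rw [topb, dif_neg h2', ihp, hstep2]





/-- the occupied set when the set of distinct preferences is `P` and `i` cars have parked -/

lemma topb_gt (S : Finset ℕ) (k : ℕ) : ∀ m, m ≤ (S.filter (fun b => k < b)).card →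
    ∀ b ∈ topb S m, k < b := by
  intro m
  induction m with
  | zero => intro _ b hb; simp [topb] at hb
  | succ m ih =>
    intro hm b hb
    have hm' : m ≤ (S.filter (fun b => k < b)).card := le_trans (Nat.le_succ m) hm
    have hTcard : (topb S m).card ≤ m := card_topb_le S m
    have hne : ((S.filter (fun b => k < b)) \ topb S m).Nonempty := by
      rw [← Finset.card_pos]
      have := Finset.le_card_sdiff (topb S m) (S.filter (fun b => k < b))
      omega
    obtain ⟨b0, hb0⟩ := hne
    rw [mem_sdiff, mem_filter] at hb0
    have hb0' : b0 ∈ S \ topb S m := mem_sdiff.2 ⟨hb0.1.1, hb0.2⟩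
    have h : (S \ topb S m).Nonempty := ⟨b0, hb0'⟩
    rw [topb, dif_pos h] at hb
    rcases mem_insert.1 hb with h1 | h1
    · subst h1
      exact lt_of_lt_of_le hb0.1.2 (Finset.le_max' _ _ hb0')
    · exact ih hm' b h1

def occ (n : ℕ) (P : Finset ℕ) (i : ℕ) : Finset ℕ :=
  P ∪ topb (Icc 1 n \ P) (i - P.card)

lemma occ_free (n : ℕ) (P : Finset ℕ) (i : ℕ) :
    Icc 1 n \ occ n P i = (Icc 1 n \ P) \ topb (Icc 1 n \ P) (i - P.card) := by
  rw [occ, sdiff_union_distrib]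
  ext x
  simp only [mem_inter, mem_sdiff]
  constructor
  · rintro ⟨⟨h1, h2⟩, _, h3⟩
    exact ⟨⟨h1, h2⟩, h3⟩
  · rintro ⟨⟨h1, h2⟩, h3⟩
    exact ⟨⟨h1, h2⟩, h1, h3⟩

lemma card_occ (n : ℕ) (P : Finset ℕ) (i : ℕ) (hP : P ⊆ Icc 1 n) (hc : P.card ≤ i)
    (hi : i ≤ n) : (occ n P i).card = i := by
  have hS : (Icc 1 n \ P).card = n - P.card := by
    rw [card_sdiff_of_subset hP, Nat.card_Icc]; omega
  have hm : i - P.card ≤ (Icc 1 n \ P).card := by omega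
  rw [occ, card_union_of_disjoint, card_topb _ _ hm]
  · omega
  · exact Finset.disjoint_left.2 fun a ha hb =>
      (mem_sdiff.1 (topb_subset _ _ hb)).2 ha

lemma occ_subset (n : ℕ) (P : Finset ℕ) (i : ℕ) (hP : P ⊆ Icc 1 n) :
    occ n P i ⊆ Icc 1 n :=
  union_subset hP (le_trans (topb_subset _ _) sdiff_subset)

lemma parkStep_occ (n : ℕ) (P : Finset ℕ) (i u p : ℕ) (hP : P ⊆ Icc 1 n)
    (hc : P.card ≤ i) (hi : i < n) (hp : p ∈ Icc 1 n) :
    parkStep n (occ n P i, u) p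
      = (occ n (insert p P) (i+1), u + if p ∈ occ n P i then 1 else 0) := by
  set S := Icc 1 n \ P with hS
  set m := i - P.card with hm
  set T := topb S m with hT
  have hScard : S.card = n - P.card := by
    rw [hS, card_sdiff_of_subset hP, Nat.card_Icc]; omega
  have hTcard : T.card = m := card_topb S m (by omega)
  have hfreecard : (S \ T).card = n - i := by
    rw [card_sdiff_of_subset (topb_subset _ _), hScard, hTcard]; omega
  have hfree : (S \ T).Nonempty := by
    rw [← card_pos, hfreecard]; omega
  by_cases hpo : p ∈ occ n P i
  · -- unlucky
    rw [parkStep, if_neg (by simp only []; exact fun hcc => hcc.2 hpo)]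
    have hmax : (WithBot.unbotD 0 (Icc 1 n \ occ n P i).max) = (S \ T).max' hfree := by
      rw [occ_free, ← hS, ← hm, ← hT, ← Finset.coe_max' hfree, WithBot.unbotD_coe]
    have hg : (S \ T).max' hfree ∈ S \ T := Finset.max'_mem _ _
    have hstep : topb S (m+1) = insert ((S \ T).max' hfree) T := by
      rw [topb, dif_pos hfree]
    simp only [hmax]
    by_cases hpP : p ∈ P
    · have hins : insert p P = P := insert_eq_self.2 hpP
      have : occ n (insert p P) (i+1) = insert ((S \ T).max' hfree) (occ n P i) := by
        rw [occ, hins, ← hS, show i + 1 - P.card = m + 1 by omega, hstep, occ, ← hS, ← hm, ← hT,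
          union_insert]
      rw [this, if_pos hpo]
    · have hpT : p ∈ T := by
        rcases mem_union.1 hpo with h1 | h1
        · exact absurd h1 hpP
        · exact h1
      have hins : (insert p P).card = P.card + 1 := card_insert_of_notMem hpP
      have hS' : Icc 1 n \ insert p P = S.erase p := by
        rw [hS, sdiff_insert']
      have : occ n (insert p P) (i+1) = insert ((S \ T).max' hfree) (occ n P i) := by
        rw [occ, hS', hins, show i + 1 - (P.card + 1) = m by omega,
          topb_erase_mem S p m hpT, hstep, occ, ← hS, ← hm, ← hT]
        have hgT : (S \ T).max' hfree ∉ T := (mem_sdiff.1 hg).2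
        have hgp : (S \ T).max' hfree ≠ p := fun hc => hgT (hc ▸ hpT)
        ext x
        by_cases hxp : x = p
        · subst hxp
          simp [hpT]
        · by_cases hxg : x = (S \ T).max' hfree
          · subst hxg
            simp [hxp]
          · simp [hxp, hxg]
            all_goals tauto
      rw [this, if_pos hpo]
  · -- lucky
    rw [parkStep, if_pos ⟨hp, hpo⟩]
    have hpP : p ∉ P := fun hc => hpo (mem_union_left _ hc)
    have hpT : p ∉ T := fun hc => hpo (mem_union_right _ hc)
    have hins : (insert p P).card = P.card + 1 := card_insert_of_notMem hpP
    have hS' : Icc 1 n \ insert p P = S.erase p := by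
      rw [hS, sdiff_insert']
    have hpS : p ∈ S := mem_sdiff.2 ⟨hp, hpP⟩
    have : occ n (insert p P) (i+1) = insert p (occ n P i) := by
      rw [occ, hS', hins, show i + 1 - (P.card + 1) = m by omega,
        topb_erase_notmem S p m hpS hpT, occ, ← hS, ← hm, ← hT, insert_union]
    rw [this, if_neg hpo]
    rfl



noncomputable def psi (n : ℕ) : ℕ → ℕ → Polynomial ℤ
  | 0, y => if y = 0 then 1 else 0
  | r+1, y => C (y : ℤ) * psi n r (y-1)
      + (C ((n - (r+1) : ℕ) : ℤ) * X + C (((r+1) - y : ℕ) : ℤ)) * psi n r y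

lemma psi_dead (n : ℕ) : ∀ r y, r < y → psi n r y = 0 := by
  intro r
  induction r with
  | zero => intro y hy; rw [psi, if_neg (by omega)]
  | succ r ih =>
    intro y hy
    rw [psi, ih (y-1) (by omega), ih y (by omega), mul_zero, mul_zero, add_zero]

lemma choose_id (y j : ℕ) (h : j ≤ y) :
    ((y : ℤ) - j) * (y.choose j : ℤ) = (y : ℤ) * ((y-1).choose j : ℤ) := by
  have key : (y - j) * y.choose j = y * (y-1).choose j := by
    rcases Nat.eq_zero_or_pos y with rfl | hy
    · interval_cases j
      simp
    · rcases Nat.lt_or_ge j y with hlt | hge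
      · have h1 : y.choose (j+1) * (j+1) = y.choose j * (y - j) := Nat.choose_succ_right_eq y j
        have h2 : (y-1).succ * (y-1).choose j = ((y-1)+1).choose (j+1) * (j+1) :=
          Nat.add_one_mul_choose_eq (y-1) j
        rw [show (y-1).succ = y by omega, show (y-1)+1 = y by omega] at h2
        rw [mul_comm]
        omega
      · have hj : j = y := le_antisymm h hge
        subst hj
        have h0 : (j-1).choose j = 0 := Nat.choose_eq_zero_of_lt (by omega)
        simp [h0]
  calc ((y:ℤ) - j) * (y.choose j : ℤ) = (((y - j) * y.choose j : ℕ) : ℤ) := by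
        push_cast [Nat.cast_sub h]; ring
    _ = ((y * (y-1).choose j : ℕ) : ℤ) := by rw [key]
    _ = (y : ℤ) * ((y-1).choose j : ℤ) := by push_cast; ring

lemma psi_eq_bsum (n : ℕ) : ∀ r, r ≤ n → ∀ y, psi n r y =
    ∑ j ∈ range (y+1), (-1)^j * C ((y.choose j : ℤ)) *
      ∏ i ∈ Ico (n-r) n, (C ((i : ℤ)) * X + C ((n : ℤ) - j - i)) := by
  intro r
  induction r with
  | zero =>
    intro _ y
    simp only [Nat.sub_zero, Ico_self, prod_empty, mul_one, psi]
    have : ∑ j ∈ range (y+1), (-1:Polynomial ℤ)^j * C ((y.choose j : ℤ))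
        = C (∑ j ∈ range (y+1), (-1)^j * (y.choose j : ℤ)) := by
      rw [map_sum]
      exact sum_congr rfl fun j _ => by rw [map_mul, map_pow, map_neg, map_one]
    rw [this, Int.alternating_sum_range_choose]
    split_ifs <;> simp
  | succ r ih =>
    intro hr y
    have hr' : r ≤ n := by omega
    set i0 := n - (r+1) with hi0
    have hi0n : i0 < n := by omega
    have hio1 : i0 + 1 = n - r := by omega
    set Pi' : ℕ → Polynomial ℤ :=
      fun j => ∏ i ∈ Ico (i0+1) n, (C ((i : ℤ)) * X + C ((n : ℤ) - j - i)) with hPi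
    have hbsum : ∀ z : ℕ, psi n r z = ∑ j ∈ range (z+1), (-1)^j * C ((z.choose j : ℤ)) * Pi' j := by
      intro z
      rw [ih hr' z]
      exact sum_congr rfl fun j _ => by rw [hPi, hio1]
    have step1 : ∑ j ∈ range (y+1), (-1)^j * C ((y.choose j : ℤ)) *
        ∏ i ∈ Ico (n-(r+1)) n, (C ((i : ℤ)) * X + C ((n : ℤ) - j - i))
        = ∑ j ∈ range (y+1),
          ((C ((i0 : ℤ)) * X + C ((r+1 : ℤ) - y)) * ((-1)^j * C ((y.choose j : ℤ)) * Pi' j)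
            + (-1)^j * C (((y:ℤ) - j) * (y.choose j : ℤ)) * Pi' j) := by
      refine sum_congr rfl fun j hj => ?_
      rw [Finset.prod_eq_prod_Ico_succ_bot hi0n]
      simp only [hPi]
      have hfac : C ((i0 : ℤ)) * X + C ((n : ℤ) - j - i0)
          = (C ((i0 : ℤ)) * X + C ((r+1 : ℤ) - y)) + C ((y:ℤ) - j) := by
        rw [add_assoc, ← map_add]
        congr 2
        omega
      rw [hfac, map_mul]
      ring
    rw [step1, sum_add_distrib, ← mul_sum, ← hbsum y]
    have step2 : ∑ j ∈ range (y+1), (-1)^j * C (((y:ℤ) - j) * (y.choose j : ℤ)) * Pi' j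
        = C ((y:ℤ)) * psi n r (y-1) := by
      have : ∀ j ∈ range (y+1), (-1:Polynomial ℤ)^j * C (((y:ℤ) - j) * (y.choose j : ℤ)) * Pi' j
          = C ((y:ℤ)) * ((-1)^j * C (((y-1).choose j : ℤ)) * Pi' j) := by
        intro j hj
        rw [choose_id y j (by simp at hj; omega), map_mul]
        ring
      rw [sum_congr rfl this, ← mul_sum]
      congr 1
      rcases Nat.eq_zero_or_pos y with rfl | hy
      · rw [hbsum 0]
      · rw [hbsum (y-1)]
        rw [show y + 1 = (y - 1 + 1) + 1 by omega, sum_range_succ]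
        have h0 : (y-1).choose (y-1+1) = 0 := Nat.choose_eq_zero_of_lt (by omega)
        rw [show y - 1 + 1 = y by omega] at h0 ⊢
        simp [h0]
    rw [step2, psi]
    by_cases hyr : y ≤ r + 1
    · have hcst : (((r+1) - y : ℕ) : ℤ) = (r+1 : ℤ) - y := by omega
      rw [hcst, ← hi0]
      ring
    · rw [psi_dead n r y (by omega)]
      ring








lemma foldl_parkStep_snd (n : ℕ) : ∀ (l : List ℕ) (s : Finset ℕ) (u : ℕ),
    (l.foldl (parkStep n) (s, u)).2 = u + (l.foldl (parkStep n) (s, 0)).2 := by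
  intro l
  induction l with
  | nil => intro s u; simp
  | cons p l ih =>
    intro s u
    simp only [List.foldl_cons]
    have hstep : ∀ v : ℕ, parkStep n (s, v) p
        = ((parkStep n (s, 0) p).1, v + (parkStep n (s, 0) p).2) := by
      intro v
      rw [parkStep, parkStep]
      split_ifs <;> simp
    rw [hstep u, ih _ (u + (parkStep n (s, 0) p).2)]
    have h2 : (List.foldl (parkStep n) (parkStep n (s, 0) p) l).2
        = (parkStep n (s, 0) p).2
          + (List.foldl (parkStep n) ((parkStep n (s, 0) p).1, 0) l).2 :=
      ih ((parkStep n (s, 0) p).1) ((parkStep n (s, 0) p).2)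
    rw [h2]
    omega

lemma card_Icc_sdiff (k : ℕ) (P : Finset ℕ) :
    (Icc 1 k \ P).card = k - (P ∩ Icc 1 k).card := by
  have : Icc 1 k \ P = Icc 1 k \ (P ∩ Icc 1 k) := by
    ext x; simp only [mem_sdiff, mem_inter]; tauto
  rw [this, card_sdiff_of_subset inter_subset_right, Nat.card_Icc]
  omega

lemma cond_le (n k r : ℕ) (hk : k ≤ n) (P : Finset ℕ) (f : Fin r → Fin n)
    (hcond : ∀ j : Fin n, (j : ℕ) < k → (((j:ℕ)+1 ∈ P) ∨ ∃ i, f i = j)) :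
    k - (P ∩ Icc 1 k).card ≤ r := by
  have himg : Icc 1 k \ P ⊆ Finset.image (fun i => ((f i : ℕ)+1)) univ := by
    intro s hs
    rw [mem_sdiff, mem_Icc] at hs
    have hsn : s - 1 < n := by omega
    rcases hcond ⟨s-1, hsn⟩ (by simpa using by omega) with h1 | ⟨i, hi⟩
    · simp only at h1
      rw [show s - 1 + 1 = s by omega] at h1
      exact absurd h1 hs.2
    · refine mem_image.2 ⟨i, mem_univ _, ?_⟩
      rw [hi]
      simp only
      omega
  calc k - (P ∩ Icc 1 k).card = (Icc 1 k \ P).card := (card_Icc_sdiff k P).symm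
    _ ≤ (Finset.image (fun i => ((f i : ℕ)+1)) univ).card := card_le_card himg
    _ ≤ (univ : Finset (Fin r)).card := card_image_le
    _ = r := by simp

lemma main (n k : ℕ) (hk : k ≤ n) : ∀ r, r ≤ n → ∀ P : Finset ℕ, P ⊆ Icc 1 n →
    P.card ≤ n - r →
    ∑ f : Fin r → Fin n,
      (if ∀ j : Fin n, (j : ℕ) < k → (((j:ℕ)+1 ∈ P) ∨ ∃ i, f i = j) then
        (X : Polynomial ℤ) ^
          ((List.ofFn fun i => ((f i : ℕ)+1)).foldl (parkStep n) (occ n P (n-r), 0)).2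
      else 0)
    = psi n r (k - (P ∩ Icc 1 k).card) := by
  intro r
  induction r with
  | zero =>
    intro _ P hP hPc
    set x := (P ∩ Icc 1 k).card with hx
    rw [psi]
    by_cases hdead : k - x = 0
    · rw [if_pos hdead]
      have hcond : ∀ j : Fin n, (j : ℕ) < k → (((j:ℕ)+1 ∈ P) ∨ ∃ i : Fin 0, False) := by
        intro j hj
        left
        have hsub : Icc 1 k ⊆ P := by
          have hxk : x ≤ k := by
            rw [hx]
            calc (P ∩ Icc 1 k).card ≤ (Icc 1 k).card := card_le_card inter_subset_right
              _ = k := by rw [Nat.card_Icc]; omega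
          have : (P ∩ Icc 1 k).card = (Icc 1 k).card := by rw [Nat.card_Icc]; omega
          have heq := Finset.eq_of_subset_of_card_le inter_subset_right (le_of_eq this.symm)
          intro s hs
          rw [← heq] at hs
          exact (mem_inter.1 hs).1
        exact hsub (mem_Icc.2 ⟨by omega, by omega⟩)
      rw [Fintype.sum_eq_single (fun i : Fin 0 => i.elim0)
        (fun f hf => absurd (Subsingleton.elim f _) hf)]
      rw [if_pos (fun j hj => (hcond j hj).imp id (fun ⟨i, _⟩ => i.elim0))]
      simp [List.ofFn_zero]
    · rw [if_neg hdead]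
      refine Finset.sum_eq_zero fun f _ => ?_
      rw [if_neg]
      intro hcond
      exact hdead (Nat.le_zero.1 (cond_le n k 0 hk P f hcond))
  | succ r ih =>
    intro hr P hP hPc
    set x := (P ∩ Icc 1 k).card with hx
    clear_value x
    have hxk : x ≤ k := by
      rw [hx]
      calc (P ∩ Icc 1 k).card ≤ (Icc 1 k).card := card_le_card inter_subset_right
        _ = k := by rw [Nat.card_Icc]; omega
    by_cases hdead : r + 1 < k - x
    · rw [psi_dead n (r+1) _ hdead]
      refine Finset.sum_eq_zero fun f _ => ?_
      rw [if_neg]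
      intro hcond
      have := cond_le n k (r+1) hk P f hcond
      omega
    · -- alive
      push_neg at hdead
      have hrn : r + 1 ≤ n := hr
      have hi_lt : n - (r+1) < n := by omega
      have hsplit : ∀ (G : (Fin (r+1) → Fin n) → Polynomial ℤ),
          ∑ f : Fin (r+1) → Fin n, G f
            = ∑ p : Fin n × (Fin r → Fin n), G (Fin.cons p.1 p.2) :=
        fun G => (Fintype.sum_equiv (Fin.consEquiv (fun _ => Fin n)) _ G (fun p => rfl)).symm
      rw [hsplit, Fintype.sum_prod_type]
      have hinner : ∀ a : Fin n,
          ∑ g : Fin r → Fin n,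
            (if ∀ j : Fin n, (j : ℕ) < k →
                (((j:ℕ)+1 ∈ P) ∨ ∃ i, (Fin.cons a g : Fin (r+1) → Fin n) i = j) then
              (X : Polynomial ℤ) ^
                ((List.ofFn fun i => (((Fin.cons a g : Fin (r+1) → Fin n) i : ℕ)+1)).foldl
                  (parkStep n) (occ n P (n-(r+1)), 0)).2
            else 0)
          = X ^ (if ((a:ℕ)+1) ∈ occ n P (n-(r+1)) then 1 else 0)
            * psi n r (k - ((insert ((a:ℕ)+1) P) ∩ Icc 1 k).card) := by
        intro a
        have han : (a:ℕ) < n := a.isLt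
        have hmem : ((a:ℕ)+1) ∈ Icc 1 n := mem_Icc.2 ⟨by omega, by omega⟩
        have hP'sub : insert ((a:ℕ)+1) P ⊆ Icc 1 n := insert_subset hmem hP
        have hP'card : (insert ((a:ℕ)+1) P).card ≤ n - r :=
          le_trans (card_insert_le _ _) (by omega)
        rw [← ih (by omega) (insert ((a:ℕ)+1) P) hP'sub hP'card, mul_sum]
        refine sum_congr rfl fun g _ => ?_
        rw [List.ofFn_succ]
        simp only [Fin.cons_zero, Fin.cons_succ]
        rw [List.foldl_cons,
          parkStep_occ n P (n-(r+1)) 0 ((a:ℕ)+1) hP (by omega) hi_lt hmem,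
          show n - (r+1) + 1 = n - r by omega,
          foldl_parkStep_snd]
        have hcond : (∀ j : Fin n, (j : ℕ) < k →
              (((j:ℕ)+1 ∈ P) ∨ ∃ i, (Fin.cons a g : Fin (r+1) → Fin n) i = j))
            ↔ (∀ j : Fin n, (j : ℕ) < k →
              (((j:ℕ)+1 ∈ insert ((a:ℕ)+1) P) ∨ ∃ i, g i = j)) := by
          refine forall_congr' fun j => imp_congr Iff.rfl ?_
          rw [Fin.exists_fin_succ]
          simp only [Fin.cons_zero, Fin.cons_succ, mem_insert]
          have haj : ((j:ℕ)+1 = (a:ℕ)+1) ↔ a = j := by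
            constructor
            · intro h; exact Fin.ext (by omega)
            · intro h; rw [h]
          rw [haj]
          constructor
          · rintro (h | h | h)
            · exact Or.inl (Or.inr h)
            · exact Or.inl (Or.inl h)
            · exact Or.inr h
          · rintro ((h | h) | h)
            · exact Or.inr (Or.inl h)
            · exact Or.inl h
            · exact Or.inr (Or.inr h)
        rw [if_congr hcond rfl rfl]
        split_ifs <;> simp [pow_add]
      rw [sum_congr rfl (fun a _ => hinner a)]
      -- transport to sum over Icc 1 n
      have houter : ∀ (H : ℕ → Polynomial ℤ),
          ∑ a : Fin n, H ((a:ℕ)+1) = ∑ p ∈ Icc 1 n, H p := by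
        intro H
        have hn0 : 0 < n := by omega
        refine Finset.sum_nbij' (fun a : Fin n => (a:ℕ)+1)
          (fun p => (⟨min (p-1) (n-1), by omega⟩ : Fin n)) ?_ ?_ ?_ ?_ ?_
        · intro a _
          show ((a:ℕ)+1) ∈ Icc 1 n
          exact mem_Icc.2 ⟨by omega, by have := a.isLt; omega⟩
        · intro p _
          exact mem_univ _
        · intro a _
          have := a.isLt
          exact Fin.ext (by simp; omega)
        · intro p hp
          rw [mem_Icc] at hp
          simp
          omega
        · intro a _
          rfl
      rw [houter (fun p => X ^ (if p ∈ occ n P (n-(r+1)) then 1 else 0)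
            * psi n r (k - ((insert p P) ∩ Icc 1 k).card))]
      -- partition Icc 1 n into A (needed letters, free), B (occupied), Cr (rest)
      set i : ℕ := n - (r+1) with hidef
      clear_value i
      set A : Finset ℕ := Icc 1 k \ P with hA
      set B : Finset ℕ := occ n P i with hB
      set Cr : Finset ℕ := (Icc 1 n \ B) \ A with hCr
      have hSfilter : (Icc 1 n \ P).filter (fun b => k < b)
          = Icc (k+1) n \ (P ∩ Icc (k+1) n) := by
        ext z
        simp only [mem_filter, mem_sdiff, mem_Icc, mem_inter]
        constructor
        · rintro ⟨⟨⟨h1, h2⟩, h3⟩, h4⟩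
          exact ⟨⟨by omega, h2⟩, fun hc => h3 hc.1⟩
        · rintro ⟨⟨h1, h2⟩, h3⟩
          refine ⟨⟨⟨by omega, h2⟩, fun hc => h3 ⟨hc, by omega, h2⟩⟩, by omega⟩
      have hPsplit : (P ∩ Icc 1 k).card + (P ∩ Icc (k+1) n).card = P.card := by
        rw [← card_union_of_disjoint]
        · congr 1
          ext z
          simp only [mem_union, mem_inter, mem_Icc]
          constructor
          · rintro (h | h) <;> exact h.1
          · intro hz
            have := mem_Icc.1 (hP hz)
            by_cases hzk : z ≤ k
            · exact Or.inl ⟨hz, by omega, hzk⟩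
            · exact Or.inr ⟨hz, by omega, this.2⟩
        · refine disjoint_left.2 fun z hz1 hz2 => ?_
          have h1 := (mem_Icc.1 (mem_inter.1 hz1).2).2
          have h2 := (mem_Icc.1 (mem_inter.1 hz2).2).1
          omega
      have hABdisj : Disjoint A B := by
        refine disjoint_left.2 fun z hzA hzB => ?_
        rw [hA, mem_sdiff, mem_Icc] at hzA
        rcases mem_union.1 hzB with h1 | h1
        · exact hzA.2 h1
        · -- z in top block: all elements > k
          have hfc : ((Icc 1 n \ P).filter (fun b => k < b)).card
              = (n - k) - (P ∩ Icc (k+1) n).card := by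
            rw [hSfilter, card_sdiff_of_subset inter_subset_right, Nat.card_Icc]
            omega
          have hm : i - P.card ≤ ((Icc 1 n \ P).filter (fun b => k < b)).card := by
            rw [hfc]
            have hxP : (P ∩ Icc 1 k).card ≤ P.card := card_le_card inter_subset_left
            omega
          have := topb_gt (Icc 1 n \ P) k (i - P.card) hm z h1
          omega
      have hAsubIcc : A ⊆ Icc 1 n := by
        intro z hz
        rw [hA, mem_sdiff, mem_Icc] at hz
        exact mem_Icc.2 ⟨hz.1.1, by omega⟩
      have hBsubIcc : B ⊆ Icc 1 n := occ_subset n P i hP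
      have hACr : Disjoint A Cr := by
        refine disjoint_left.2 fun z hzA hzC => ?_
        rw [hCr, mem_sdiff] at hzC
        exact hzC.2 hzA
      have hBCr : Disjoint B Cr := by
        refine disjoint_left.2 fun z hzB hzC => ?_
        rw [hCr, mem_sdiff, mem_sdiff] at hzC
        exact hzC.1.2 hzB
      have hunion : A ∪ (B ∪ Cr) = Icc 1 n := by
        ext z
        simp only [mem_union]
        constructor
        · rintro (h | h | h)
          · exact hAsubIcc h
          · exact hBsubIcc h
          · rw [hCr, mem_sdiff, mem_sdiff] at h
            exact h.1.1
        · intro hz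
          by_cases h1 : z ∈ A
          · exact Or.inl h1
          by_cases h2 : z ∈ B
          · exact Or.inr (Or.inl h2)
          · exact Or.inr (Or.inr (by rw [hCr, mem_sdiff, mem_sdiff]; exact ⟨⟨hz, h2⟩, h1⟩))
      rw [← hunion, sum_union (disjoint_union_right.2 ⟨hABdisj, hACr⟩), sum_union hBCr]
      -- evaluate the three sums
      have hcardA : A.card = k - x := by
        rw [hA, card_Icc_sdiff, hx]
      have hsumA : ∑ p ∈ A, (X ^ (if p ∈ occ n P i then 1 else 0)
            * psi n r (k - ((insert p P) ∩ Icc 1 k).card))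
          = A.card • psi n r (k - x - 1) := by
        rw [← sum_const]
        refine sum_congr rfl fun p hp => ?_
        have hpB : p ∉ occ n P i := disjoint_left.1 hABdisj hp
        rw [hA, mem_sdiff] at hp
        have hins : (insert p P) ∩ Icc 1 k = insert p (P ∩ Icc 1 k) :=
          insert_inter_of_mem hp.1
        have hcard : ((insert p P) ∩ Icc 1 k).card = x + 1 := by
          rw [hins, card_insert_of_notMem (fun hc => hp.2 (mem_inter.1 hc).1), ← hx]
        rw [if_neg hpB, hcard, pow_zero, one_mul, show k - (x+1) = k - x - 1 by omega]
      have hcardB : B.card = i := by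
        rw [hB, card_occ n P i hP (by omega) (by omega)]
      have hsumB : ∑ p ∈ B, (X ^ (if p ∈ occ n P i then 1 else 0)
            * psi n r (k - ((insert p P) ∩ Icc 1 k).card))
          = B.card • (X * psi n r (k - x)) := by
        rw [← sum_const]
        refine sum_congr rfl fun p hp => ?_
        have hcard : ((insert p P) ∩ Icc 1 k).card = x := by
          by_cases hpk : p ∈ Icc 1 k
          · have hpP : p ∈ P := by
              rcases mem_union.1 hp with h1 | h1
              · exact h1
              · exfalso
                have hfc : ((Icc 1 n \ P).filter (fun b => k < b)).card
                    = (n - k) - (P ∩ Icc (k+1) n).card := by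
                  rw [hSfilter, card_sdiff_of_subset inter_subset_right, Nat.card_Icc]
                  omega
                have hm : i - P.card ≤ ((Icc 1 n \ P).filter (fun b => k < b)).card := by
                  rw [hfc]
                  have hxP : (P ∩ Icc 1 k).card ≤ P.card := card_le_card inter_subset_left
                  omega
                have := topb_gt (Icc 1 n \ P) k (i - P.card) hm p h1
                have := (mem_Icc.1 hpk).2
                omega
            rw [insert_eq_self.2 hpP, ← hx]
          · rw [insert_inter_of_notMem hpk, ← hx]
        rw [if_pos hp, hcard, pow_one]
      have hsumC : ∑ p ∈ Cr, (X ^ (if p ∈ occ n P i then 1 else 0)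
            * psi n r (k - ((insert p P) ∩ Icc 1 k).card))
          = Cr.card • psi n r (k - x) := by
        rw [← sum_const]
        refine sum_congr rfl fun p hp => ?_
        have hpB : p ∉ B := by
          rw [hCr, mem_sdiff, mem_sdiff] at hp
          exact hp.1.2
        have hpA : p ∉ A := by
          rw [hCr, mem_sdiff] at hp
          exact hp.2
        have hpIcc : p ∈ Icc 1 n := by
          rw [hCr, mem_sdiff, mem_sdiff] at hp
          exact hp.1.1
        have hcard : ((insert p P) ∩ Icc 1 k).card = x := by
          by_cases hpk : p ∈ Icc 1 k
          · have hpP : p ∈ P := by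
              by_contra hc
              exact hpA (by rw [hA, mem_sdiff]; exact ⟨hpk, hc⟩)
            rw [insert_eq_self.2 hpP, ← hx]
          · rw [insert_inter_of_notMem hpk, ← hx]
        rw [if_neg hpB, hcard, pow_zero, one_mul]
      have hcardC : Cr.card = (r+1) - (k - x) := by
        rw [hCr]
        rw [card_sdiff_of_subset (by
          intro z hz
          rw [mem_sdiff]
          exact ⟨hAsubIcc hz, disjoint_left.1 hABdisj hz⟩)]
        rw [card_sdiff_of_subset hBsubIcc, Nat.card_Icc, hcardB, hcardA]
        omega
      rw [hsumA, hsumB, hsumC, hcardA, hcardB, hcardC, psi]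
      rw [nsmul_eq_mul, nsmul_eq_mul, nsmul_eq_mul]
      rw [show ((k - x : ℕ) : Polynomial ℤ) = C ((k - x : ℕ) : ℤ) by
          rw [C_eq_natCast],
        show ((i : ℕ) : Polynomial ℤ) = C ((i : ℕ) : ℤ) by rw [C_eq_natCast],
        show (((r+1) - (k - x) : ℕ) : Polynomial ℤ) = C (((r+1) - (k - x) : ℕ) : ℤ) by
          rw [C_eq_natCast]]
      rw [hidef]
      ring


end Stmt8

theorem stmt_8 (n k : ℕ) (hn : 0 < n) (hk : k ≤ n) :
    (∑ j ∈ Finset.range (k + 1),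
        (-1) ^ j * C ((k.choose j : ℤ)) *
          ∏ i ∈ Finset.range n, (C ((i : ℤ)) * X + C ((n : ℤ) - j - i)) : ℤ[X]) =
      (∑ w ∈ Finset.univ.filter
          (fun w : Fin n → Fin n => ∀ j : Fin n, (j : ℕ) < k → ∃ i, w i = j),
        X ^ unlucky n (List.ofFn fun i => (w i : ℕ) + 1)) ∧
    ∀ i : ℕ, 0 ≤ (∑ j ∈ Finset.range (k + 1),
        (-1) ^ j * C ((k.choose j : ℤ)) *
          ∏ i ∈ Finset.range n, (C ((i : ℤ)) * X + C ((n : ℤ) - j - i)) : ℤ[X]).coeff i := by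
  have hmain := Stmt8.main n k hk n (le_refl n) ∅ (Finset.empty_subset _) (by simp)
  have hocc : Stmt8.occ n ∅ (n - n) = ∅ := by
    rw [Nat.sub_self, Stmt8.occ]
    simp [Stmt8.topb]
  rw [hocc] at hmain
  have hbsum := Stmt8.psi_eq_bsum n n (le_refl n) k
  rw [Nat.sub_self, ← Finset.range_eq_Ico] at hbsum
  have hfilter : (∑ w ∈ Finset.univ.filter
        (fun w : Fin n → Fin n => ∀ j : Fin n, (j : ℕ) < k → ∃ i, w i = j),
      (X : ℤ[X]) ^ unlucky n (List.ofFn fun i => (w i : ℕ) + 1))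
      = ∑ f : Fin n → Fin n,
        (if ∀ j : Fin n, (j : ℕ) < k → (((j:ℕ)+1 ∈ (∅ : Finset ℕ)) ∨ ∃ i, f i = j) then
          (X : ℤ[X]) ^
            ((List.ofFn fun i => ((f i : ℕ)+1)).foldl (parkStep n) ((∅ : Finset ℕ), 0)).2
        else 0) := by
    rw [Finset.sum_filter]
    refine Finset.sum_congr rfl fun f _ => ?_
    have : (∀ j : Fin n, (j : ℕ) < k → ∃ i, f i = j)
        ↔ (∀ j : Fin n, (j : ℕ) < k → (((j:ℕ)+1 ∈ (∅ : Finset ℕ)) ∨ ∃ i, f i = j)) := by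
      refine forall_congr' fun j => imp_congr Iff.rfl ?_
      simp
    rw [if_congr this rfl rfl]
    rfl
  have hcard : ((∅ : Finset ℕ) ∩ Finset.Icc 1 k).card = 0 := by simp
  rw [hcard, Nat.sub_zero] at hmain
  have key : (∑ j ∈ Finset.range (k + 1),
        (-1) ^ j * C ((k.choose j : ℤ)) *
          ∏ i ∈ Finset.range n, (C ((i : ℤ)) * X + C ((n : ℤ) - j - i)) : ℤ[X]) =
      (∑ w ∈ Finset.univ.filter
          (fun w : Fin n → Fin n => ∀ j : Fin n, (j : ℕ) < k → ∃ i, w i = j),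
        X ^ unlucky n (List.ofFn fun i => (w i : ℕ) + 1)) := by
    rw [hfilter, ← hbsum, ← hmain]
  refine ⟨key, fun i => ?_⟩
  rw [key]
  rw [Polynomial.finset_sum_coeff]
  refine Finset.sum_nonneg fun w _ => ?_
  rw [Polynomial.coeff_X_pow]
  split_ifs <;> norm_num
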